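/- Define the map μ on (ℚ(y₁,…,y₅))⁵ by μ(y₁,y₂,y₃,y₄,y₅) = (y₂(y₁+1), y₁²y₃/(y₁+1)², y₁²y₄/(y₁+1)², y₅(y₁+1), 1/y₁). Then μ is the cluster transformation of applying mutation μ₁ followed by the cyclic permutation (5 4 3 2 1) to the Y-seed (B, (y₁,…,y₅)) where B is the 5×5 skew-symmetric matrix with rows (0,-1,2,2,-1), (1,0,-3,0,2), (-2,3,0,-3,2), (-2,0,3,0,-1), (1,-2,-2,1,0); moreover σ(μ₁(B)) = B, i.e., this is a mutation loop of length 1. -/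

import Mathlib

open Matrix

def matMutation {n : ℕ} (B : Matrix (Fin n) (Fin n) ℤ) (k : Fin n) :
    Matrix (Fin n) (Fin n) ℤ := fun i j =>
  if i = k ∨ j = k then -B i j
  else if 0 < B i k ∧ 0 < B k j then B i j + B i k * B k j
  else if B i k < 0 ∧ B k j < 0 then B i j - B i k * B k j
  else B i j

noncomputable def Ymut {n : ℕ} {K : Type*} [Field K]
    (B : Matrix (Fin n) (Fin n) ℤ) (Y : Fin n → K) (k : Fin n) : Fin n → K :=
  fun i =>
    if i = k then (Y k)⁻¹
    else if 0 ≤ B k i then Y i * ((Y k)⁻¹ + 1) ^ (-(B k i))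
    else Y i * (Y k + 1) ^ (-(B k i))

/-- for the period-1 quiver with the given 5×5 exchange matrix `B`,
mutation at vertex 1 followed by the cyclic permutation `σ = (5 4 3 2 1)`
(acting by `σ(Y)_i = Y_{σ⁻¹(i)}`, i.e. `σ⁻¹(i) = i+1` cyclically) is a mutation
loop of length 1, and its cluster transformation is
`μ(y) = (y₂(y₁+1), y₁²y₃/(y₁+1)², y₁²y₄/(y₁+1)², y₅(y₁+1), 1/y₁)`. -/
theorem period_one_quiver_mutation_loop :
    let K := FractionRing (MvPolynomial (Fin 5) ℚ)
    let y : Fin 5 → K := fun i => algebraMap (MvPolynomial (Fin 5) ℚ) K (MvPolynomial.X i)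
    let B : Matrix (Fin 5) (Fin 5) ℤ :=
      !![0, -1, 2, 2, -1;
         1, 0, -3, 0, 2;
         -2, 3, 0, -3, 2;
         -2, 0, 3, 0, -1;
         1, -2, -2, 1, 0]
    let B' := matMutation B 0
    let Y' := Ymut B y 0
    (∀ i j, B' (i + 1) (j + 1) = B i j) ∧
    Y' (0 + 1) = y 1 * (y 0 + 1) ∧
    Y' (1 + 1) = (y 0) ^ 2 * y 2 / (y 0 + 1) ^ 2 ∧
    Y' (2 + 1) = (y 0) ^ 2 * y 3 / (y 0 + 1) ^ 2 ∧
    Y' (3 + 1) = y 4 * (y 0 + 1) ∧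
    Y' (4 + 1) = 1 / y 0 := by
  intro K y B B' Y'
  have hinj := IsFractionRing.injective (MvPolynomial (Fin 5) ℚ) K
  have hy0 : y 0 ≠ 0 := by
    simp only [y]
    rw [Ne, map_eq_zero_iff _ hinj]
    exact MvPolynomial.X_ne_zero 0
  have hy01 : y 0 + 1 ≠ 0 := by
    simp only [y]
    rw [show (1 : K) = algebraMap (MvPolynomial (Fin 5) ℚ) K 1 from
      (map_one (algebraMap (MvPolynomial (Fin 5) ℚ) K)).symm,
      ← map_add, Ne, map_eq_zero_iff _ hinj]
    intro h
    have := congrArg (MvPolynomial.coeff 0) h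
    simp [MvPolynomial.coeff_X] at this
  have h1 : (1 : Fin 5) ≠ 0 := by decide
  have h2 : (2 : Fin 5) ≠ 0 := by decide
  have h3 : (3 : Fin 5) ≠ 0 := by decide
  have h4 : (4 : Fin 5) ≠ 0 := by decide
  refine ⟨by intro i j; fin_cases i <;> fin_cases j <;> decide, ?_, ?_, ?_, ?_, ?_⟩
  · show Ymut B y 0 1 = _
    norm_num [Ymut, B, h1]
  · show Ymut B y 0 2 = _
    norm_num [Ymut, B, h2, Matrix.cons_val_two, Matrix.cons_val_one, Matrix.head_cons, Matrix.tail_cons]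
    rw [show (y 0)⁻¹ + 1 = (y 0 + 1) / y 0 by rw [div_eq_mul_inv, add_mul, mul_inv_cancel₀ hy0, one_mul, add_comm]]
    rw [div_pow, inv_div, mul_div_assoc', mul_comm (y 2)]
  · show Ymut B y 0 3 = _
    norm_num [Ymut, B, h3, Matrix.cons_val_three, Matrix.cons_val_one, Matrix.head_cons, Matrix.tail_cons]
    rw [show (y 0)⁻¹ + 1 = (y 0 + 1) / y 0 by rw [div_eq_mul_inv, add_mul, mul_inv_cancel₀ hy0, one_mul, add_comm]]
    rw [div_pow, inv_div, mul_div_assoc', mul_comm (y 3)]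
  · show Ymut B y 0 4 = _
    norm_num [Ymut, B, h4, Matrix.cons_val_four, Matrix.cons_val_one, Matrix.head_cons, Matrix.tail_cons]
  · show Ymut B y 0 0 = _
    norm_num [Ymut]
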